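/- Let Θ = {1, …, N}, let V_θ, F_θ : Δ(X) → ℝ be continuous for each θ ∈ Θ, let π ∈ Δ(Θ) be a probability vector, and fix μ ∈ Δ(X). Consider the screening problem: maximize Σ_{θ=1}^N π(θ)·E_{P_θ}[V_θ] over menus (P_1, …, P_N) ∈ Δ²(X)^N subject to the barycenter constraints E_{P_θ}[ν] = μ for all θ and the incentive-compatibility constraints E_{P_θ}[F_θ] ≥ E_{P_{θ'}}[F_θ] for all θ, θ' ∈ Θ. Then the supremum is attained, and it is attained by a menu (P*_1, …, P*_N) in which each P*_θ has support of size at most (N+2)·|X|. -/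

import Mathlib

open MeasureTheory Topology Filter

noncomputable section

/-- Expected value `E_P[W] = ∫ W(ν) dP(ν)` of a function `W : Δ(X) → ℝ`
under a Borel probability measure `P ∈ Δ²(X)` on the simplex `Δ(X)`. -/
def expct {X : Type*} [Fintype X] (P : ProbabilityMeasure (stdSimplex ℝ X))
    (W : stdSimplex ℝ X → ℝ) : ℝ :=
  ∫ ν, W ν ∂(P : Measure (stdSimplex ℝ X))

/-- `P ∈ Δ²(X)` has barycenter `E_P[ν] = μ`. -/
def isBary {X : Type*} [Fintype X] (P : ProbabilityMeasure (stdSimplex ℝ X))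
    (μ : stdSimplex ℝ X) : Prop :=
  ∀ x : X, expct P (fun ν => (ν : X → ℝ) x) = (μ : X → ℝ) x

/-- `P ∈ Δ²(X)` has support of size at most `m`: it is a convex combination of at
most `m` Dirac measures on `Δ(X)`. -/
def finSupp {X : Type*} [Fintype X] (P : ProbabilityMeasure (stdSimplex ℝ X)) (m : ℕ) : Prop :=
  ∃ (p : Fin m → ℝ) (ν : Fin m → stdSimplex ℝ X),
    (∀ j, 0 ≤ p j) ∧ (∑ j, p j = 1) ∧
    (P : Measure (stdSimplex ℝ X)) = ∑ j, ENNReal.ofReal (p j) • Measure.dirac (ν j)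

/-- The information possibility set
`𝒱(μ) = {(E_P[V^1], …, E_P[V^n]) : P ∈ Δ²(X), E_P[ν] = μ} ⊆ ℝ^n`. -/
def VSet {X : Type*} [Fintype X] {n : ℕ} (V : Fin n → stdSimplex ℝ X → ℝ)
    (μ : stdSimplex ℝ X) : Set (Fin n → ℝ) :=
  {v | ∃ P : ProbabilityMeasure (stdSimplex ℝ X), isBary P μ ∧ ∀ i, expct P (V i) = v i}

lemma dite_sum {M : Type*} [AddCommMonoid M] {k m : ℕ} (hkm : k ≤ m) (f : Fin k → M) :
    (∑ j : Fin m, if h : (j : ℕ) < k then f ⟨j, h⟩ else 0) = ∑ i : Fin k, f i := by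
  have h1 : (∑ j : Fin m, if h : (j : ℕ) < k then f ⟨j, h⟩ else 0)
      = ∑ j ∈ Finset.range m, (if h : j < k then f ⟨j, h⟩ else 0) :=
    Fin.sum_univ_eq_sum_range (fun j => if h : j < k then f ⟨j, h⟩ else 0) m
  have h2 : ∑ j ∈ Finset.range m, (if h : j < k then f ⟨j, h⟩ else 0)
      = ∑ j ∈ Finset.range k, (if h : j < k then f ⟨j, h⟩ else 0) := by
    refine (Finset.sum_subset (Finset.range_subset_range.2 hkm) ?_).symm
    intro j _ hjk
    rw [Finset.mem_range] at hjk
    rw [dif_neg hjk]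
  have h3 : (∑ j ∈ Finset.range k, (if h : j < k then f ⟨j, h⟩ else 0)) = ∑ i : Fin k, f i := by
    rw [← Fin.sum_univ_eq_sum_range (fun j => if h : j < k then f ⟨j, h⟩ else 0) k]
    refine Finset.sum_congr rfl fun i _ => ?_
    simp
  rw [h1, h2, h3]

lemma pad_rep {E : Type*} [AddCommGroup E] [Module ℝ E] {ι : Type*} [Fintype ι]
    {K : Set E} (w : ι → ℝ) (z : ι → E) (hw0 : ∀ i, 0 ≤ w i) (hw1 : ∑ i, w i = 1)
    (hz : ∀ i, z i ∈ K) {x : E} (hx : ∑ i, w i • z i = x) {m : ℕ}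
    (hm : Fintype.card ι ≤ m) :
    ∃ (p : Fin m → ℝ) (ν : Fin m → E), (∀ j, 0 ≤ p j) ∧ (∑ j, p j = 1) ∧
      (∀ j, ν j ∈ K) ∧ ∑ j, p j • ν j = x := by
  have hne : Nonempty ι := by
    by_contra h
    rw [not_nonempty_iff] at h
    rw [Finset.univ_eq_empty, Finset.sum_empty] at hw1
    exact one_ne_zero hw1.symm
  obtain ⟨i₀⟩ := hne
  set k := Fintype.card ι with hk
  set e := Fintype.equivFin ι with he
  refine ⟨fun j => if h : (j : ℕ) < k then w (e.symm ⟨j, h⟩) else 0,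
    fun j => if h : (j : ℕ) < k then z (e.symm ⟨j, h⟩) else z i₀, ?_, ?_, ?_, ?_⟩
  · intro j; dsimp only; split
    · exact hw0 _
    · exact le_refl 0
  · rw [dite_sum hm (fun i => w (e.symm i))]
    rw [Equiv.sum_comp e.symm w]
    exact hw1
  · intro j; dsimp only; split
    · exact hz _
    · exact hz i₀
  · have hj : ∀ j : Fin m, (if h : (j:ℕ) < k then w (e.symm ⟨j,h⟩) else 0) •
        (if h : (j:ℕ) < k then z (e.symm ⟨j,h⟩) else z i₀)
        = (if h : (j:ℕ) < k then w (e.symm ⟨j,h⟩) • z (e.symm ⟨j,h⟩) else 0) := by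
      intro j; split <;> simp
    calc (∑ j : Fin m, (if h : (j:ℕ) < k then w (e.symm ⟨j,h⟩) else 0) •
        (if h : (j:ℕ) < k then z (e.symm ⟨j,h⟩) else z i₀))
        = ∑ j : Fin m, (if h : (j:ℕ) < k then w (e.symm ⟨j,h⟩) • z (e.symm ⟨j,h⟩) else 0) :=
          Finset.sum_congr rfl fun j _ => hj j
      _ = ∑ i : Fin k, w (e.symm i) • z (e.symm i) := dite_sum hm (fun i => w (e.symm i) • z (e.symm i))
      _ = ∑ i, w i • z i := Equiv.sum_comp e.symm (fun i => w i • z i)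
      _ = x := hx

lemma isCompact_convexHull' {ι : Type*} [Fintype ι] {K : Set (ι → ℝ)} (hK : IsCompact K) :
    IsCompact (convexHull ℝ K) := by
  classical
  rcases K.eq_empty_or_nonempty with rfl | hKne
  · simp
  set d := Fintype.card ι with hd
  have himg : convexHull ℝ K =
      (fun q : (Fin (d+1) → ℝ) × (Fin (d+1) → ι → ℝ) => ∑ j, q.1 j • q.2 j) ''
      ((stdSimplex ℝ (Fin (d+1))) ×ˢ (Set.univ.pi fun _ => K)) := by
    apply Set.Subset.antisymm
    · intro x hx
      obtain ⟨ι', hι', z, w, hz, hai, hw0, hw1, hx'⟩ := eq_pos_convex_span_of_mem_convexHull hx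
      letI := hι'
      have hcard : Fintype.card ι' ≤ d + 1 := by
        have h1 := hai.card_le_finrank_succ
        have h2 : Module.finrank ℝ (vectorSpan ℝ (Set.range z)) ≤ Module.finrank ℝ (ι → ℝ) :=
          Submodule.finrank_le _
        rw [Module.finrank_pi] at h2
        omega
      obtain ⟨p, ν, h0, h1, hmem, hsum⟩ := pad_rep w z (fun i => (hw0 i).le) hw1
        (fun i => hz (Set.mem_range_self i)) hx' hcard
      exact ⟨(p, ν), ⟨⟨h0, h1⟩, fun j _ => hmem j⟩, hsum⟩
    · rintro x ⟨q, ⟨hq1, hq2⟩, rfl⟩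
      exact (convex_convexHull ℝ K).sum_mem (fun j _ => hq1.1 j) hq1.2
        (fun j _ => subset_convexHull ℝ K (hq2 j (Set.mem_univ j)))
  rw [himg]
  exact ((isCompact_stdSimplex _ _).prod (isCompact_univ_pi fun _ => hK)).image
    (continuous_finset_sum _ fun j _ =>
      ((continuous_apply j).comp continuous_fst).smul
        ((continuous_apply j).comp continuous_snd))

lemma cont_integrable {X : Type*} [Fintype X] {E : Type*} [NormedAddCommGroup E]
    (μ : Measure (stdSimplex ℝ X)) [IsFiniteMeasure μ]
    {f : stdSimplex ℝ X → E} (hf : Continuous f) : Integrable f μ :=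
  hf.integrable_of_hasCompactSupport
    (isCompact_univ.of_isClosed_subset (isClosed_tsupport _) (Set.subset_univ _))

lemma moment_rep {X : Type*} [Fintype X] {ι : Type*} [Fintype ι]
    (g : ι → stdSimplex ℝ X → ℝ) (hg : ∀ i, Continuous (g i))
    (P : ProbabilityMeasure (stdSimplex ℝ X)) {m : ℕ} (hm : Fintype.card ι + 1 ≤ m) :
    ∃ (p : Fin m → ℝ) (ν : Fin m → stdSimplex ℝ X), (∀ j, 0 ≤ p j) ∧ (∑ j, p j = 1) ∧
      ∀ i, ∑ j, p j * g i (ν j) = expct P (g i) := by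
  classical
  set G : stdSimplex ℝ X → (ι → ℝ) := fun ν i => g i ν with hG
  have hGc : Continuous G := continuous_pi hg
  have hGi : Integrable G (P : Measure (stdSimplex ℝ X)) := cont_integrable _ hGc
  have hmem : (∫ ν, G ν ∂(P : Measure (stdSimplex ℝ X))) ∈ convexHull ℝ (Set.range G) :=
    (convex_convexHull ℝ _).integral_mem (isCompact_convexHull' (isCompact_range hGc)).isClosed
      (Filter.Eventually.of_forall fun ν => subset_convexHull ℝ _ (Set.mem_range_self ν)) hGi
  obtain ⟨ι', hι', z, w, hz, hai, hw0, hw1, hx'⟩ := eq_pos_convex_span_of_mem_convexHull hmem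
  letI := hι'
  have hcard : Fintype.card ι' ≤ m := by
    have h1 := hai.card_le_finrank_succ
    have h2 : Module.finrank ℝ (vectorSpan ℝ (Set.range z)) ≤ Module.finrank ℝ (ι → ℝ) :=
      Submodule.finrank_le _
    rw [Module.finrank_pi] at h2
    omega
  obtain ⟨p, ν', h0, h1, hmemR, hsum⟩ := pad_rep w z (fun i => (hw0 i).le) hw1
    (fun i => hz (Set.mem_range_self i)) hx' hcard
  choose s hs using fun j => hmemR j
  refine ⟨p, s, h0, h1, fun i => ?_⟩
  have hcomp : (∫ ν, G ν ∂(P : Measure (stdSimplex ℝ X))) i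
      = ∫ ν, g i ν ∂(P : Measure (stdSimplex ℝ X)) := by
    have := (ContinuousLinearMap.integral_comp_comm
      (ContinuousLinearMap.proj (R := ℝ) (φ := fun _ : ι => ℝ) i) hGi).symm
    simpa [hG] using this
  calc ∑ j, p j * g i (s j) = ∑ j, (p j • ν' j) i := by
        refine Finset.sum_congr rfl fun j _ => ?_
        rw [← hs j]; simp [hG]
      _ = (∑ j, p j • ν' j) i := (Finset.sum_apply i Finset.univ _).symm
      _ = (∫ ν, G ν ∂(P : Measure (stdSimplex ℝ X))) i := by rw [hsum]
      _ = expct P (g i) := hcomp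

lemma mix_prob {Ω : Type*} [MeasurableSpace Ω] {m : ℕ} (p : Fin m → ℝ) (ν : Fin m → Ω)
    (h0 : ∀ j, 0 ≤ p j) (h1 : ∑ j, p j = 1) :
    IsProbabilityMeasure (∑ j, ENNReal.ofReal (p j) • MeasureTheory.Measure.dirac (ν j)) := by
  constructor
  rw [Measure.finset_sum_apply]
  simp only [Measure.smul_apply, measure_univ, smul_eq_mul, mul_one]
  rw [← ENNReal.ofReal_sum_of_nonneg (fun j _ => h0 j), h1, ENNReal.ofReal_one]

lemma mix_expct {X : Type*} [Fintype X] {m : ℕ} (p : Fin m → ℝ) (ν : Fin m → stdSimplex ℝ X)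
    (h0 : ∀ j, 0 ≤ p j) (P : ProbabilityMeasure (stdSimplex ℝ X))
    (hP : (P : Measure (stdSimplex ℝ X)) = ∑ j, ENNReal.ofReal (p j) • Measure.dirac (ν j))
    (W : stdSimplex ℝ X → ℝ) (hW : Continuous W) :
    expct P W = ∑ j, p j * W (ν j) := by
  have hint : ∀ j ∈ Finset.univ, Integrable W (ENNReal.ofReal (p j) • Measure.dirac (ν j)) :=
    fun j _ => (cont_integrable _ hW).smul_measure ENNReal.ofReal_ne_top
  rw [expct, hP, integral_finset_sum_measure hint]
  refine Finset.sum_congr rfl fun j _ => ?_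
  rw [integral_smul_measure, integral_dirac, ENNReal.toReal_ofReal (h0 j), smul_eq_mul]

lemma expct_subsingleton {X : Type*} [Fintype X] (h : Fintype.card X = 1)
    (P : ProbabilityMeasure (stdSimplex ℝ X)) (W : stdSimplex ℝ X → ℝ)
    (pt : stdSimplex ℝ X) : expct P W = W pt := by
  obtain ⟨x, hx⟩ := Fintype.card_eq_one_iff.mp h
  haveI : Unique X := { default := x, uniq := hx }
  haveI : Subsingleton (stdSimplex ℝ X) := by
    constructor
    intro a b
    apply Subtype.ext
    funext y
    have ha : (a : X → ℝ) default = 1 := by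
      have := a.2.2; rwa [Fintype.sum_unique] at this
    have hb : (b : X → ℝ) default = 1 := by
      have := b.2.2; rwa [Fintype.sum_unique] at this
    rw [Unique.eq_default y]
    exact ha.trans hb.symm
  have hW : W = fun _ => W pt := funext fun ν => by rw [Subsingleton.elim ν pt]
  rw [expct, hW, integral_const]
  simp

lemma reduce {X : Type*} [Fintype X] [Nonempty X] {N : ℕ}
    (F : Fin N → stdSimplex ℝ X → ℝ) (hF : ∀ θ, Continuous (F θ))
    (W : stdSimplex ℝ X → ℝ) (hW : Continuous W)
    (μ : stdSimplex ℝ X) (P : ProbabilityMeasure (stdSimplex ℝ X)) (hP : isBary P μ) :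
    ∃ (p : Fin ((N+2) * Fintype.card X) → ℝ) (ν : Fin ((N+2) * Fintype.card X) → stdSimplex ℝ X),
      (∀ j, 0 ≤ p j) ∧ (∑ j, p j = 1) ∧
      (∀ x : X, ∑ j, p j * (ν j : X → ℝ) x = (μ : X → ℝ) x) ∧
      (∀ i, ∑ j, p j * F i (ν j) = expct P (F i)) ∧
      (∑ j, p j * W (ν j) = expct P W) := by
  classical
  have hcX : 1 ≤ Fintype.card X := Fintype.card_pos
  by_cases h1 : Fintype.card X = 1
  · have hm : 0 < (N+2) * Fintype.card X := by positivity
    set j₀ : Fin ((N+2) * Fintype.card X) := ⟨0, hm⟩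
    have hsum : ∀ c : ℝ, (∑ j, (if j = j₀ then (1:ℝ) else 0) * c) = c := by
      intro c
      rw [Finset.sum_eq_single j₀]
      · simp
      · intro b _ hb; rw [if_neg hb, zero_mul]
      · intro hj; exact absurd (Finset.mem_univ j₀) hj
    refine ⟨fun j => if j = j₀ then 1 else 0, fun _ => μ, ?_, ?_, ?_, ?_, ?_⟩
    · intro j; dsimp only; split <;> norm_num
    · have := hsum 1; simpa using this
    · intro x; rw [hsum]
    · intro i; rw [hsum, expct_subsingleton h1 P (F i) μ]
    · rw [hsum, expct_subsingleton h1 P W μ]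
  · have h2 : 2 ≤ Fintype.card X := by omega
    set g : (X ⊕ (Fin N ⊕ Unit)) → stdSimplex ℝ X → ℝ := fun i => match i with
      | Sum.inl x => fun ν => (ν : X → ℝ) x
      | Sum.inr (Sum.inl θ) => F θ
      | Sum.inr (Sum.inr _) => W
      with hg_def
    have hg : ∀ i, Continuous (g i) := by
      rintro (x | θ | u)
      · exact (continuous_apply x).comp continuous_subtype_val
      · exact hF θ
      · exact hW
    have hm : Fintype.card (X ⊕ (Fin N ⊕ Unit)) + 1 ≤ (N+2) * Fintype.card X := by
      simp only [Fintype.card_sum, Fintype.card_fin, Fintype.card_unit]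
      nlinarith [h2]
    obtain ⟨p, ν, h0, h1', hmom⟩ := moment_rep g hg P hm
    refine ⟨p, ν, h0, h1', fun x => ?_, fun i => ?_, ?_⟩
    · exact (hmom (Sum.inl x)).trans (hP x)
    · exact hmom (Sum.inr (Sum.inl i))
    · exact hmom (Sum.inr (Sum.inr ()))

/-- screening with information. With finitely many receiver types
`Θ = {1, …, N}`, continuous `V_θ, F_θ : Δ(X) → ℝ` and a prior `π ∈ Δ(Θ)`, the screening
problem (maximize `Σ_θ π(θ)·E_{P_θ}[V_θ]` over menus with barycenter `μ` satisfying the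
IC constraints `E_{P_θ}[F_θ] ≥ E_{P_{θ'}}[F_θ]`) attains its supremum at a menu in which
each `P*_θ` has support of size at most `(N+2)·|X|`. -/
theorem statement_19 {X : Type*} [Fintype X] [Nonempty X] {N : ℕ}
    (V F : Fin N → stdSimplex ℝ X → ℝ)
    (hV : ∀ θ, Continuous (V θ)) (hF : ∀ θ, Continuous (F θ))
    (π : Fin N → ℝ) (hπ0 : ∀ θ, 0 ≤ π θ) (hπ1 : ∑ θ, π θ = 1)
    (μ : stdSimplex ℝ X) :
    ∃ P : Fin N → ProbabilityMeasure (stdSimplex ℝ X),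
      (∀ θ, isBary (P θ) μ) ∧
      (∀ θ θ', expct (P θ') (F θ) ≤ expct (P θ) (F θ)) ∧
      (∀ θ, finSupp (P θ) ((N + 2) * Fintype.card X)) ∧
      ∀ Q : Fin N → ProbabilityMeasure (stdSimplex ℝ X),
        (∀ θ, isBary (Q θ) μ) →
        (∀ θ θ', expct (Q θ') (F θ) ≤ expct (Q θ) (F θ)) →
        ∑ θ, π θ * expct (Q θ) (V θ) ≤ ∑ θ, π θ * expct (P θ) (V θ) := by
  classical
  set m := (N + 2) * Fintype.card X with hm_def
  have hmpos : 0 < m := Nat.mul_pos (by omega) Fintype.card_pos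
  let E' := Fin N → (Fin m → ℝ) × (Fin m → stdSimplex ℝ X)
  let ev : (Fin m → ℝ) × (Fin m → stdSimplex ℝ X) → (stdSimplex ℝ X → ℝ) → ℝ :=
    fun a W => ∑ j, a.1 j * W (a.2 j)
  let obj : E' → ℝ := fun q => ∑ θ, π θ * ev (q θ) (V θ)
  let Feas : Set E' := {q | (∀ θ, (q θ).1 ∈ stdSimplex ℝ (Fin m)) ∧
      (∀ θ (x : X), ∑ j, (q θ).1 j * ((q θ).2 j : X → ℝ) x = (μ : X → ℝ) x) ∧
      (∀ θ θ', ev (q θ') (F θ) ≤ ev (q θ) (F θ))}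
  have hc1 : ∀ (θ : Fin N) (j : Fin m), Continuous fun q : E' => (q θ).1 j :=
    fun θ j => (continuous_apply j).comp (continuous_fst.comp (continuous_apply θ))
  have hc2 : ∀ (θ : Fin N) (j : Fin m), Continuous fun q : E' => (q θ).2 j :=
    fun θ j => (continuous_apply j).comp (continuous_snd.comp (continuous_apply θ))
  have hcW : ∀ (θ : Fin N) (W : stdSimplex ℝ X → ℝ), Continuous W →
      Continuous fun q : E' => ev (q θ) W := fun θ W hW =>
    continuous_finset_sum _ fun j _ => (hc1 θ j).mul (hW.comp (hc2 θ j))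
  have hclosed : IsClosed Feas := by
    show IsClosed ({q : E' | ∀ θ, (q θ).1 ∈ stdSimplex ℝ (Fin m)} ∩
      ({q : E' | ∀ θ (x : X), ∑ j, (q θ).1 j * ((q θ).2 j : X → ℝ) x = (μ : X → ℝ) x} ∩
       {q : E' | ∀ θ θ', ev (q θ') (F θ) ≤ ev (q θ) (F θ)}))
    refine IsClosed.inter ?_ (IsClosed.inter ?_ ?_)
    · rw [Set.setOf_forall]
      exact isClosed_iInter fun θ =>
        (isClosed_stdSimplex _ _).preimage (continuous_fst.comp (continuous_apply θ))
    · rw [Set.setOf_forall]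
      refine isClosed_iInter fun θ => ?_
      rw [Set.setOf_forall]
      refine isClosed_iInter fun x => ?_
      exact isClosed_eq (continuous_finset_sum _ fun j _ => (hc1 θ j).mul
        (((continuous_apply x).comp continuous_subtype_val).comp (hc2 θ j))) continuous_const
    · rw [Set.setOf_forall]
      refine isClosed_iInter fun θ => ?_
      rw [Set.setOf_forall]
      refine isClosed_iInter fun θ' => ?_
      exact isClosed_le (hcW θ' (F θ) (hF θ)) (hcW θ (F θ) (hF θ))
  have hK : IsCompact {q : E' | ∀ θ, (q θ).1 ∈ stdSimplex ℝ (Fin m)} := by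
    have heq : {q : E' | ∀ θ, (q θ).1 ∈ stdSimplex ℝ (Fin m)} =
        Set.univ.pi (fun _ : Fin N =>
          (stdSimplex ℝ (Fin m)) ×ˢ (Set.univ : Set (Fin m → stdSimplex ℝ X))) := by
      ext q
      constructor
      · intro h θ _
        exact ⟨h θ, Set.mem_univ _⟩
      · intro h θ
        exact (h θ (Set.mem_univ θ)).1
    rw [heq]
    exact isCompact_univ_pi fun _ => (isCompact_stdSimplex _ _).prod isCompact_univ
  have hFc : IsCompact Feas := hK.of_isClosed_subset hclosed (fun q hq => hq.1)
  set j₀ : Fin m := ⟨0, hmpos⟩ with hj₀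
  have hsum1 : ∀ c : ℝ, (∑ j : Fin m, (if j = j₀ then (1:ℝ) else 0) * c) = c := by
    intro c
    rw [Finset.sum_eq_single j₀]
    · simp
    · intro b _ hb; rw [if_neg hb, zero_mul]
    · intro hj; exact absurd (Finset.mem_univ j₀) hj
  have hq₀ : (fun _ : Fin N => ((fun j => if j = j₀ then (1:ℝ) else 0), fun _ => μ)) ∈ Feas := by
    refine ⟨fun θ => ⟨fun j => by dsimp only; split <;> norm_num, by simpa using hsum1 1⟩,
      fun θ x => by
        show ∑ j : Fin m, (if j = j₀ then (1:ℝ) else 0) * (μ : X → ℝ) x = (μ : X → ℝ) x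
        exact hsum1 _, fun θ θ' => le_refl _⟩
  have hobj : Continuous obj :=
    continuous_finset_sum _ fun θ _ => continuous_const.mul (hcW θ (V θ) (hV θ))
  obtain ⟨q, hqF, hqmax⟩ := hFc.exists_isMaxOn ⟨_, hq₀⟩ hobj.continuousOn
  have h0 : ∀ θ j, 0 ≤ (q θ).1 j := fun θ j => (hqF.1 θ).1 j
  have h1 : ∀ θ, ∑ j, (q θ).1 j = 1 := fun θ => (hqF.1 θ).2
  let P : Fin N → ProbabilityMeasure (stdSimplex ℝ X) := fun θ =>
    ⟨∑ j, ENNReal.ofReal ((q θ).1 j) • Measure.dirac ((q θ).2 j), mix_prob _ _ (h0 θ) (h1 θ)⟩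
  have hPcoe : ∀ θ, (P θ : Measure (stdSimplex ℝ X))
      = ∑ j, ENNReal.ofReal ((q θ).1 j) • Measure.dirac ((q θ).2 j) := fun θ => rfl
  have hPe : ∀ (θ : Fin N) (W : stdSimplex ℝ X → ℝ), Continuous W →
      expct (P θ) W = ev (q θ) W :=
    fun θ W hW => mix_expct _ _ (h0 θ) (P θ) (hPcoe θ) W hW
  refine ⟨P, ?_, ?_, ?_, ?_⟩
  · intro θ x
    rw [hPe θ (fun ν => (ν : X → ℝ) x) ((continuous_apply x).comp continuous_subtype_val)]
    exact hqF.2.1 θ x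
  · intro θ θ'
    rw [hPe θ' _ (hF θ), hPe θ _ (hF θ)]
    exact hqF.2.2 θ θ'
  · intro θ
    exact ⟨(q θ).1, (q θ).2, h0 θ, h1 θ, rfl⟩
  · intro Q hQb hQic
    choose p' ν' hp0 hp1 hbar hFm hVm using
      fun θ => reduce F hF (V θ) (hV θ) μ (Q θ) (hQb θ)
    have hq'F : (fun θ => (p' θ, ν' θ)) ∈ Feas := by
      refine ⟨fun θ => ⟨hp0 θ, hp1 θ⟩, fun θ x => hbar θ x, fun θ θ' => ?_⟩
      show ev (p' θ', ν' θ') (F θ) ≤ ev (p' θ, ν' θ) (F θ)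
      have e1 : ev (p' θ', ν' θ') (F θ) = expct (Q θ') (F θ) := hFm θ' θ
      have e2 : ev (p' θ, ν' θ) (F θ) = expct (Q θ) (F θ) := hFm θ θ
      rw [e1, e2]
      exact hQic θ θ'
    have hle := hqmax hq'F
    calc ∑ θ, π θ * expct (Q θ) (V θ) = obj (fun θ => (p' θ, ν' θ)) := by
          refine Finset.sum_congr rfl fun θ _ => ?_
          rw [← hVm θ]
      _ ≤ obj q := hle
      _ = ∑ θ, π θ * expct (P θ) (V θ) := by
          refine Finset.sum_congr rfl fun θ _ => ?_
          rw [hPe θ (V θ) (hV θ)]
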